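/- If A ⊆ ℝ is nanoscopic and B ⊆ ℝ has strong measure zero, then A ∪ B is nanoscopic. -/

import Mathlib

open Set MeasureTheory

/-- `M` can be covered by a sequence of intervals whose `k`-th length is at most `len k`. -/
def IntervalCover (M : Set ℝ) (len : ℕ → ℝ) : Prop :=
  ∃ a b : ℕ → ℝ, M ⊆ ⋃ k, Set.Icc (a k) (b k) ∧ ∀ k, b k - a k ≤ len k

def Microscopic (M : Set ℝ) : Prop :=
  ∀ ε : ℝ, 0 < ε → ε < 1 → IntervalCover M (fun k => ε ^ k)

def Nanoscopic (M : Set ℝ) : Prop :=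
  ∀ ε : ℝ, 0 < ε → ε < 1 → IntervalCover M (fun k => ε ^ (2 ^ k))

def Picoscopic (M : Set ℝ) : Prop :=
  ∀ ε : ℝ, 0 < ε → ε < 1 → IntervalCover M (fun k => ε ^ (Nat.factorial (k + 1)))

def FnMicroscopic (f : ℕ → ℝ → ℝ) (M : Set ℝ) : Prop :=
  ∀ ε : ℝ, 0 < ε → ε < 1 → IntervalCover M (fun k => f k ε)

/-- The standard conditions on a sequence of functions generating generalized microscopic sets. -/
def StandardConditions (f : ℕ → ℝ → ℝ) : Prop :=
  (∀ n, ∀ x ∈ Set.Ioo (0:ℝ) 1, f n x ∈ Set.Ioo (0:ℝ) 1) ∧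
  (∀ n, StrictMonoOn (f n) (Set.Ioo (0:ℝ) 1)) ∧
  (∀ n, ∀ x ∈ Set.Ioo (0:ℝ) 1, f (n + 1) x ≤ f n x) ∧
  (∀ n, Filter.Tendsto (f n) (nhdsWithin 0 (Set.Ioi 0)) (nhds 0)) ∧
  (∃ x₀ : ℝ, 0 < x₀ ∧ ∀ x : ℝ, 0 < x → x < x₀ → Summable fun n => f n x)

def StrongMeasureZero (B : Set ℝ) : Prop :=
  ∀ ε : ℕ → ℝ, (∀ k, 0 < ε k) → IntervalCover B ε

def IsFsigma (F : Set ℝ) : Prop :=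
  ∃ C : ℕ → Set ℝ, (∀ n, IsClosed (C n)) ∧ F = ⋃ n, C n

/-- `A` can be covered by an `Fσ` set which is `(f n)`-microscopic. -/
def MicroStar (f : ℕ → ℝ → ℝ) (A : Set ℝ) : Prop :=
  ∃ F : Set ℝ, IsFsigma F ∧ FnMicroscopic f F ∧ A ⊆ F

/-- `m`-`(f n)`-microscopic sets. -/
def MFnMicroscopic (f : ℕ → ℝ → ℝ) (m : ℕ) (M : Set ℝ) : Prop :=
  ∀ ε : ℝ, 0 < ε → ε < 1 → ∃ a b : ℕ → ℝ, M ⊆ ⋃ k, Set.Icc (a k) (b k) ∧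
    ∀ k : ℕ, ∀ j < m, b (m * k + j) - a (m * k + j) ≤ f k ε

def TwoNanoscopic (M : Set ℝ) : Prop :=
  MFnMicroscopic (fun k ε => ε ^ (2 ^ k)) 2 M

namespace Stmt8Aux

/-- Monotonicity of `IntervalCover` in the length bounds. -/
lemma cover_mono {M : Set ℝ} {l l' : ℕ → ℝ} (h : ∀ k, l k ≤ l' k)
    (hc : IntervalCover M l) : IntervalCover M l' := by
  obtain ⟨a, b, h1, h2⟩ := hc
  exact ⟨a, b, h1, fun k => (h2 k).trans (h k)⟩

/-- If `A` can be covered within the nanoscopic budgets for `e`, leaving an infinite set `Q`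
of positions holding empty intervals, then `A ∪ B` is coverable for any strong measure zero
set `B`, by inserting a cover of `B` at the positions of `Q`. -/
lemma merge {A B : Set ℝ} {e : ℝ} (he0 : 0 < e)
    (hB : StrongMeasureZero B) (a b : ℕ → ℝ) (Q : Set ℕ) (hQ : Q.Infinite)
    (hcov : A ⊆ ⋃ n, Set.Icc (a n) (b n))
    (hlen : ∀ n, b n - a n ≤ e ^ 2 ^ n)
    (hempty : ∀ n ∈ Q, b n < a n) :
    IntervalCover (A ∪ B) (fun k => e ^ 2 ^ k) := by
  classical
  set q : ℕ → ℕ := fun i => (Set.Infinite.natEmbedding Q hQ i).1 with hqdef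
  have hqinj : Function.Injective q := fun i j h =>
    (Set.Infinite.natEmbedding Q hQ).injective (Subtype.val_injective h)
  have hqQ : ∀ i, q i ∈ Q := fun i => (Set.Infinite.natEmbedding Q hQ i).2
  obtain ⟨c, d, hccov, hclen⟩ := hB (fun i => e ^ 2 ^ (q i)) (fun i => pow_pos he0 _)
  refine ⟨fun n => if h : ∃ i, q i = n then c h.choose else a n,
          fun n => if h : ∃ i, q i = n then d h.choose else b n, ?_, ?_⟩
  · rintro x (hx | hx)
    · obtain ⟨n, hn⟩ := Set.mem_iUnion.mp (hcov hx)
      have hne : a n ≤ b n := le_trans hn.1 hn.2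
      have hnQ : ¬ ∃ i, q i = n := by
        rintro ⟨i, rfl⟩
        exact absurd hne (not_le.mpr (hempty _ (hqQ i)))
      refine Set.mem_iUnion.mpr ⟨n, ?_⟩
      simp only [dif_neg hnQ]
      exact hn
    · obtain ⟨i, hi⟩ := Set.mem_iUnion.mp (hccov hx)
      have hex : ∃ i', q i' = q i := ⟨i, rfl⟩
      refine Set.mem_iUnion.mpr ⟨q i, ?_⟩
      simp only [dif_pos hex]
      have hch : hex.choose = i := hqinj hex.choose_spec
      rw [hch]
      exact hi
  · intro n
    by_cases h : ∃ i, q i = n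
    · simp only [dif_pos h]
      have h2 : d h.choose - c h.choose ≤ e ^ 2 ^ q h.choose := hclen h.choose
      rwa [h.choose_spec] at h2
    · simp only [dif_neg h]
      exact hlen n

/-- A compact set with nanoscopic covers can be covered by a finite block of intervals whose
lengths fit the budgets `e ^ 2 ^ (M + i)`, starting at an arbitrary position `M`. -/
lemma blockCover {K : Set ℝ} (hK : IsCompact K) {e : ℝ} (he0 : 0 < e) (he4 : e ≤ 1/4)
    (hN : ∀ δ : ℝ, 0 < δ → δ < 1 → IntervalCover K (fun k => δ ^ 2 ^ k)) (M : ℕ) :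
    ∃ (N : ℕ) (f g : ℕ → ℝ), (K ⊆ ⋃ i, Set.Icc (f i) (g i)) ∧
      (∀ i, g i - f i ≤ e ^ 2 ^ (M + i)) ∧ (∀ i, N < i → g i < f i) := by
  classical
  have he1 : e < 1 := lt_of_le_of_lt he4 (by norm_num)
  set δ : ℝ := e ^ 2 ^ (M + 1) with hδdef
  have hδ0 : 0 < δ := pow_pos he0 _
  have hδ1 : δ < 1 := pow_lt_one₀ he0.le he1 (Nat.two_pow_pos (M+1)).ne'
  obtain ⟨u, v, hcov, hlen⟩ := hN δ hδ0 hδ1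
  have hopen : K ⊆ ⋃ k, Set.Ioo (u k - δ ^ 2 ^ k) (v k + δ ^ 2 ^ k) := by
    intro x hx
    obtain ⟨k, hk⟩ := Set.mem_iUnion.mp (hcov hx)
    have hp : (0:ℝ) < δ ^ 2 ^ k := pow_pos hδ0 _
    exact Set.mem_iUnion.mpr ⟨k, ⟨by linarith [hk.1], by linarith [hk.2]⟩⟩
  obtain ⟨t, ht⟩ := hK.elim_finite_subcover _ (fun k => isOpen_Ioo) hopen
  refine ⟨t.sup id, fun i => if i ∈ t then u i - δ ^ 2 ^ i else 1,
          fun i => if i ∈ t then v i + δ ^ 2 ^ i else 0, ?_, ?_, ?_⟩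
  · intro x hx
    obtain ⟨k, hkt, hk⟩ := Set.mem_iUnion₂.mp (ht hx)
    refine Set.mem_iUnion.mpr ⟨k, ?_⟩
    simp only [if_pos hkt]
    exact ⟨hk.1.le, hk.2.le⟩
  · intro i
    by_cases hi : i ∈ t
    · simp only [if_pos hi]
      have h1 : v i - u i ≤ δ ^ 2 ^ i := hlen i
      have hkey : δ ^ 2 ^ i = (e ^ 2 ^ (M + i)) ^ 2 := by
        rw [hδdef, ← pow_mul, ← pow_mul]
        congr 1
        rw [← pow_add, ← pow_succ]
        congr 1
        omega
      have hx1 : e ^ 2 ^ (M + i) ≤ e := by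
        calc e ^ 2 ^ (M + i) ≤ e ^ 1 :=
          pow_le_pow_of_le_one he0.le he1.le (Nat.one_le_two_pow)
        _ = e := pow_one e
      have hxpos : (0:ℝ) < e ^ 2 ^ (M + i) := pow_pos he0 _
      nlinarith [hxpos, hx1, he4]
    · simp only [if_neg hi]
      have := pow_pos he0 (2 ^ (M + i))
      linarith
  · intro i hi
    have hit : i ∉ t := by
      intro h
      have hls := Finset.le_sup (f := id) h
      simp only [id] at hls
      omega
    simp only [if_neg hit]
    norm_num

/-- A closed set all of whose budgets admit nanoscopic covers can be covered leaving an
infinite set of empty reserved positions, by covering its compact pieces in consecutive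
finite blocks separated by gaps. -/
lemma assembly {C : Set ℝ} (hC : IsClosed C) {e : ℝ} (he0 : 0 < e) (he4 : e ≤ 1/4)
    (hN : ∀ δ : ℝ, 0 < δ → δ < 1 → IntervalCover C (fun k => δ ^ 2 ^ k)) :
    ∃ (a b : ℕ → ℝ) (Q : Set ℕ), Q.Infinite ∧ (C ⊆ ⋃ n, Set.Icc (a n) (b n)) ∧
      (∀ n, b n - a n ≤ e ^ 2 ^ n) ∧ (∀ n ∈ Q, b n < a n) := by
  classical
  have hblock : ∀ (R M : ℕ), ∃ (N : ℕ) (f g : ℕ → ℝ),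
      ((C ∩ Set.Icc (-(R:ℝ)) R) ⊆ ⋃ i, Set.Icc (f i) (g i)) ∧
      (∀ i, g i - f i ≤ e ^ 2 ^ (M + i)) ∧ (∀ i, N < i → g i < f i) := by
    intro R M
    have hcomp : IsCompact (C ∩ Set.Icc (-(R:ℝ)) R) := isCompact_Icc.inter_left hC
    refine blockCover hcomp he0 he4 (fun δ h0 h1 => ?_) M
    obtain ⟨u, v, h'1, h'2⟩ := hN δ h0 h1
    exact ⟨u, v, Set.inter_subset_left.trans h'1, h'2⟩
  choose NN ff gg hbc hbl hbe using hblock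
  set Ms : ℕ → ℕ := fun R => Nat.rec 1 (fun R' acc => acc + NN R' acc + 2) R with hMsdef
  have hMsS : ∀ R, Ms (R + 1) = Ms R + NN R (Ms R) + 2 := fun R => rfl
  have hmono : StrictMono Ms := strictMono_nat_of_lt_succ (fun R => by rw [hMsS]; omega)
  have hpos : ∀ R, 1 ≤ Ms R := by
    intro R
    have h0 : Ms 0 = 1 := rfl
    have := hmono.monotone (Nat.zero_le R)
    omega
  have hfind : ∀ {n R : ℕ}, Ms R ≤ n → n < Ms (R + 1) →
      Nat.findGreatest (fun R => Ms R ≤ n) n = R := by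
    intro n R h1 h2
    have hRlb : R + 1 ≤ Ms R := by
      clear h1 h2
      induction R with
      | zero => simp [show Ms 0 = 1 from rfl]
      | succ R ih => rw [hMsS]; omega
    rw [Nat.findGreatest_eq_iff]
    refine ⟨by omega, fun _ => h1, ?_⟩
    intro k hk hk'
    have : Ms (R + 1) ≤ Ms k := hmono.monotone hk
    omega
  set RR : ℕ → ℕ := fun n => Nat.findGreatest (fun R => Ms R ≤ n) n with hRRdef
  have hRRle : ∀ n, 1 ≤ n → Ms (RR n) ≤ n := by
    intro n hn
    have h0 : Ms 0 ≤ n := by have : Ms 0 = 1 := rfl; omega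
    exact Nat.findGreatest_spec (P := fun R => Ms R ≤ n) (Nat.zero_le n) h0
  set a : ℕ → ℝ := fun n =>
    if n = 0 then 1
    else if n - Ms (RR n) ≤ NN (RR n) (Ms (RR n)) then ff (RR n) (Ms (RR n)) (n - Ms (RR n))
    else 1 with hadef
  set b : ℕ → ℝ := fun n =>
    if n = 0 then 0
    else if n - Ms (RR n) ≤ NN (RR n) (Ms (RR n)) then gg (RR n) (Ms (RR n)) (n - Ms (RR n))
    else 0 with hbdef
  refine ⟨a, b, Set.range (fun R => Ms (R + 1) - 1), ?_, ?_, ?_, ?_⟩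
  · apply Set.infinite_range_of_injective
    have hsm : StrictMono (fun R => Ms (R + 1) - 1) := by
      intro i j hij
      have h1 : Ms (i + 1) < Ms (j + 1) := hmono (Nat.add_lt_add_right hij 1)
      have h2 := hpos (i + 1)
      have h3 := hpos (j + 1)
      show Ms (i + 1) - 1 < Ms (j + 1) - 1
      omega
    exact hsm.injective
  · intro x hx
    set R : ℕ := ⌈|x|⌉₊ with hRdef
    have hxK : x ∈ C ∩ Set.Icc (-(R:ℝ)) R := by
      refine ⟨hx, ?_⟩
      have h1 : |x| ≤ (R : ℝ) := Nat.le_ceil _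
      have h2 := abs_le.mp h1
      exact Set.mem_Icc.mpr ⟨h2.1, h2.2⟩
    obtain ⟨i, hi⟩ := Set.mem_iUnion.mp (hbc R (Ms R) hxK)
    have hiN : i ≤ NN R (Ms R) := by
      by_contra h
      have hlt := hbe R (Ms R) i (by omega)
      have := hi.1
      have := hi.2
      linarith
    set n : ℕ := Ms R + i with hndef
    have h1 : Ms R ≤ n := by omega
    have h2 : n < Ms (R + 1) := by rw [hMsS]; omega
    have hRRn : RR n = R := hfind h1 h2
    have hn0 : n ≠ 0 := by have := hpos R; omega
    refine Set.mem_iUnion.mpr ⟨n, ?_⟩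
    have hcond : n - Ms (RR n) ≤ NN (RR n) (Ms (RR n)) := by rw [hRRn]; omega
    have ha' : a n = ff R (Ms R) i := by
      simp only [hadef]
      rw [if_neg hn0, if_pos hcond, hRRn]
      congr 1
      omega
    have hb' : b n = gg R (Ms R) i := by
      simp only [hbdef]
      rw [if_neg hn0, if_pos hcond, hRRn]
      congr 1
      omega
    rw [ha', hb']
    exact hi
  · intro n
    by_cases hn0 : n = 0
    · subst hn0
      have hp := pow_pos he0 (2 ^ 0)
      have ha' : a 0 = 1 := by simp [hadef]
      have hb' : b 0 = 0 := by simp [hbdef]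
      rw [ha', hb']
      linarith
    · by_cases hle : n - Ms (RR n) ≤ NN (RR n) (Ms (RR n))
      · have ha' : a n = ff (RR n) (Ms (RR n)) (n - Ms (RR n)) := by
          simp only [hadef]; rw [if_neg hn0, if_pos hle]
        have hb' : b n = gg (RR n) (Ms (RR n)) (n - Ms (RR n)) := by
          simp only [hbdef]; rw [if_neg hn0, if_pos hle]
        rw [ha', hb']
        have hkey := hbl (RR n) (Ms (RR n)) (n - Ms (RR n))
        have hms : Ms (RR n) + (n - Ms (RR n)) = n := by
          have := hRRle n (by omega)
          omega
        rwa [hms] at hkey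
      · have ha' : a n = 1 := by simp only [hadef]; rw [if_neg hn0, if_neg hle]
        have hb' : b n = 0 := by simp only [hbdef]; rw [if_neg hn0, if_neg hle]
        rw [ha', hb']
        have hp := pow_pos he0 (2 ^ n)
        linarith
  · rintro n ⟨R, rfl⟩
    have hnval : Ms (R + 1) - 1 = Ms R + NN R (Ms R) + 1 := by rw [hMsS]; omega
    have h1 : Ms R ≤ Ms (R + 1) - 1 := by omega
    have h2 : Ms (R + 1) - 1 < Ms (R + 1) := by have := hpos (R + 1); omega
    have hRRn : RR (Ms (R + 1) - 1) = R := hfind h1 h2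
    have hn0 : Ms (R + 1) - 1 ≠ 0 := by have := hpos R; omega
    have hgt : ¬ ((Ms (R + 1) - 1) - Ms (RR (Ms (R + 1) - 1)) ≤
        NN (RR (Ms (R + 1) - 1)) (Ms (RR (Ms (R + 1) - 1)))) := by
      rw [hRRn]; omega
    have ha' : a (Ms (R + 1) - 1) = 1 := by simp only [hadef]; rw [if_neg hn0, if_neg hgt]
    have hb' : b (Ms (R + 1) - 1) = 0 := by simp only [hbdef]; rw [if_neg hn0, if_neg hgt]
    rw [ha', hb']
    norm_num

end Stmt8Aux

theorem stmt8 (A B : Set ℝ) (hA : Nanoscopic A) (hB : StrongMeasureZero B) :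
    Nanoscopic (A ∪ B) := by
  intro ε hε0 hε1
  classical
  set e : ℝ := min ε (1/4) with hedef
  have he0 : 0 < e := lt_min hε0 (by norm_num)
  have he4 : e ≤ 1/4 := min_le_right _ _
  have heε : e ≤ ε := min_le_left _ _
  have he1 : e < 1 := lt_of_le_of_lt he4 (by norm_num)
  have huv : ∀ j : ℕ, ∃ u v : ℕ → ℝ, (A ⊆ ⋃ k, Set.Icc (u k) (v k)) ∧
      ∀ k, v k - u k ≤ (e ^ (j + 2)) ^ 2 ^ k := by
    intro j
    exact hA (e ^ (j + 2)) (pow_pos he0 _) (pow_lt_one₀ he0.le he1 (by omega))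
  choose u v hcov hlen using huv
  have key : IntervalCover (A ∪ B) (fun k => e ^ 2 ^ k) := by
    by_cases H : ∃ (j : ℕ) (p : ℝ),
        {k | Set.Icc (u j k) (v j k) ⊆ Set.Icc (p - e/2) (p + e/2)}.Infinite
    · -- Case 1: some cover accumulates inside one interval of length e
      obtain ⟨j, p, hD⟩ := H
      set D := {k | Set.Icc (u j k) (v j k) ⊆ Set.Icc (p - e/2) (p + e/2)} with hDdef
      have hQinf : ((fun k => k + 1) '' D).Infinite :=
        hD.image (fun x _ y _ h => by omega)
      refine Stmt8Aux.merge he0 hB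
        (fun n => Nat.casesOn n (p - e/2) (fun k => if k ∈ D then 1 else u j k))
        (fun n => Nat.casesOn n (p + e/2) (fun k => if k ∈ D then 0 else v j k))
        ((fun k => k + 1) '' D) hQinf ?_ ?_ ?_
      · intro x hx
        obtain ⟨k, hk⟩ := Set.mem_iUnion.mp (hcov j hx)
        by_cases hkD : k ∈ D
        · exact Set.mem_iUnion.mpr ⟨0, hkD hk⟩
        · refine Set.mem_iUnion.mpr ⟨k + 1, ?_⟩
          show x ∈ Set.Icc (if k ∈ D then (1:ℝ) else u j k) (if k ∈ D then (0:ℝ) else v j k)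
          rw [if_neg hkD, if_neg hkD]
          exact hk
      · intro n
        match n with
        | 0 =>
          show (p + e/2) - (p - e/2) ≤ e ^ 2 ^ 0
          have h20 : (2:ℕ) ^ (0:ℕ) = 1 := rfl
          rw [h20, pow_one]
          linarith
        | (k + 1) =>
          show (if k ∈ D then (0:ℝ) else v j k) - (if k ∈ D then (1:ℝ) else u j k) ≤
            e ^ 2 ^ (k + 1)
          by_cases hkD : k ∈ D
          · rw [if_pos hkD, if_pos hkD]
            have := pow_pos he0 (2 ^ (k + 1))
            linarith
          · rw [if_neg hkD, if_neg hkD]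
            calc v j k - u j k ≤ (e ^ (j + 2)) ^ 2 ^ k := hlen j k
              _ ≤ (e ^ 2) ^ 2 ^ k := by
                  refine pow_le_pow_left₀ (by positivity) ?_ _
                  exact pow_le_pow_of_le_one he0.le he1.le (by omega)
              _ = e ^ 2 ^ (k + 1) := by
                  rw [← pow_mul]
                  congr 1
                  rw [pow_succ]
                  ring
      · rintro n ⟨k, hkD, rfl⟩
        show (if k ∈ D then (0:ℝ) else v j k) < (if k ∈ D then (1:ℝ) else u j k)
        rw [if_pos hkD, if_pos hkD]
        norm_num
    · -- Case 2: no accumulation, so the closure of A is covered by every cover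
      push_neg at H
      have hclos : ∀ δ : ℝ, 0 < δ → δ < 1 →
          IntervalCover (closure A) (fun k => δ ^ 2 ^ k) := by
        intro δ hδ0 hδ1
        obtain ⟨m, hm⟩ := exists_pow_lt_of_lt_one hδ0 he1
        have hθδ : e ^ (m + 2) ≤ δ := by
          calc e ^ (m + 2) ≤ e ^ m := pow_le_pow_of_le_one he0.le he1.le (by omega)
            _ ≤ δ := hm.le
        have hθe2 : e ^ (m + 2) ≤ e ^ 2 :=
          pow_le_pow_of_le_one he0.le he1.le (by omega)
        have he2 : e ^ 2 ≤ e / 4 := by nlinarith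
        have hsub : closure A ⊆ ⋃ k, Set.Icc (u m k) (v m k) := by
          intro x hx
          by_contra hnot
          have hfin : {k | Set.Icc (u m k) (v m k) ⊆
              Set.Icc (x - e/2) (x + e/2)}.Finite := H m x
          obtain ⟨mb, hmb⟩ := hfin.bddAbove
          -- produce an element of the set above mb
          have hclosed : IsClosed (⋃ k ∈ Finset.range (mb + 1),
              Set.Icc (u m k) (v m k)) := by
            apply Set.Finite.isClosed_biUnion (Finset.range (mb + 1)).finite_toSet
            intro i _
            exact isClosed_Icc
          have hxnot : x ∈ (⋃ k ∈ Finset.range (mb + 1), Set.Icc (u m k) (v m k))ᶜ := by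
            intro hmem
            obtain ⟨k, _, hk⟩ := Set.mem_iUnion₂.mp hmem
            exact hnot (Set.mem_iUnion.mpr ⟨k, hk⟩)
          obtain ⟨r, hr0, hball⟩ :=
            Metric.mem_nhds_iff.mp (hclosed.isOpen_compl.mem_nhds hxnot)
          obtain ⟨y, hyA, hyd⟩ := Metric.mem_closure_iff.mp hx (min r (e/4))
            (lt_min hr0 (by linarith))
          obtain ⟨k, hky⟩ := Set.mem_iUnion.mp (hcov m hyA)
          have hkgt : mb < k := by
            by_contra hle
            have hyin : y ∈ ⋃ k ∈ Finset.range (mb + 1), Set.Icc (u m k) (v m k) :=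
              Set.mem_biUnion (Finset.mem_range.mpr (by omega)) hky
            have hyball : y ∈ Metric.ball x r := by
              rw [Metric.mem_ball, dist_comm]
              exact lt_of_lt_of_le hyd (min_le_left _ _)
            exact hball hyball hyin
          have hkmem : Set.Icc (u m k) (v m k) ⊆ Set.Icc (x - e/2) (x + e/2) := by
            intro z hz
            have hlen' : v m k - u m k ≤ e ^ (m + 2) := by
              calc v m k - u m k ≤ (e ^ (m + 2)) ^ 2 ^ k := hlen m k
                _ ≤ (e ^ (m + 2)) ^ 1 := pow_le_pow_of_le_one (by positivity)
                    (pow_le_one₀ he0.le he1.le) Nat.one_le_two_pow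
                _ = e ^ (m + 2) := pow_one _
            have hzy : |z - y| ≤ v m k - u m k := by
              rw [abs_le]
              constructor
              · linarith [hz.1, hky.2]
              · linarith [hz.2, hky.1]
            have hxy : |y - x| < e / 4 := by
              rw [abs_sub_comm, ← Real.dist_eq]
              exact lt_of_lt_of_le hyd (min_le_right _ _)
            have hzx : |z - x| ≤ e / 2 := by
              calc |z - x| ≤ |z - y| + |y - x| := abs_sub_le _ _ _
                _ ≤ (v m k - u m k) + e/4 := by linarith
                _ ≤ e ^ (m + 2) + e/4 := by linarith
                _ ≤ e/4 + e/4 := by linarith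
                _ = e/2 := by ring
            have := abs_le.mp hzx
            exact Set.mem_Icc.mpr ⟨by linarith [this.1], by linarith [this.2]⟩
          exact absurd (hmb hkmem) (by omega)
        refine ⟨u m, v m, hsub, fun k => ?_⟩
        calc v m k - u m k ≤ (e ^ (m + 2)) ^ 2 ^ k := hlen m k
          _ ≤ δ ^ 2 ^ k := pow_le_pow_left₀ (by positivity) hθδ _
      obtain ⟨a, b, Q, hQ, hcc, hbl', hbe'⟩ :=
        Stmt8Aux.assembly isClosed_closure he0 he4 hclos
      exact Stmt8Aux.merge he0 hB a b Q hQ (subset_closure.trans hcc) hbl' hbe'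
  exact Stmt8Aux.cover_mono (fun k => pow_le_pow_left₀ he0.le heε _) key
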